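/- The Thue–Morse sequence is not built from any finite word of odd length other than the single letter 0. -/

import Mathlib

/-- A block of `a` ones. -/
def ones (a : ℕ) : List Bool := List.replicate a true

/-- Words over {0,1} that begin and end with 0 (false = 0, true = 1). -/
def InF (v : List Bool) : Prop := v.head? = some false ∧ v.getLast? = some false

/-- `w` is a prefix of the infinite word `V`. -/
def PrefixOf (w : List Bool) (V : ℕ → Bool) : Prop :=
  ∀ i, i < w.length → w.getD i false = V i

/-- Finite stages `v 1^{a 0} v 1^{a 1} v ⋯ v`. -/
def stage (v : List Bool) (a : ℕ → ℕ) : ℕ → List Bool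
  | 0 => v
  | n + 1 => stage v a n ++ ones (a n) ++ v

/-- The infinite word `V` is built from `v`: `V = v 1^{a₁} v 1^{a₂} v ⋯`. -/
def BuiltFrom (V : ℕ → Bool) (v : List Bool) : Prop :=
  ∃ a : ℕ → ℕ, ∀ n, PrefixOf (stage v a n) V

/-- A finite word `w` is built from `v`: `w = v 1^{a₁} v ⋯ v 1^{a_k} v`, `k ≥ 1`. -/
def FBuiltFrom (w v : List Bool) : Prop :=
  ∃ a : List ℕ, a ≠ [] ∧ w = v ++ (a.map fun n => ones n ++ v).flatten

/-- `A_V`, the set of words in `𝓕` from which `V` is built. -/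
def AV (V : ℕ → Bool) : Set (List Bool) := {v | InF v ∧ BuiltFrom V v}

/-- `w` occurs in the infinite word `V` at position `k`. -/
def OccursAt (w : List Bool) (V : ℕ → Bool) (k : ℕ) : Prop :=
  ∀ i, i < w.length → w.getD i false = V (k + i)

/-- `w` is a factor (contiguous subword) of the infinite word `V`. -/
def FactorOfN (w : List Bool) (V : ℕ → Bool) : Prop := ∃ k, OccursAt w V k

/-- `w` occurs in the bi-infinite word `x` at position `k`. -/
def OccursAtZ (w : List Bool) (x : ℤ → Bool) (k : ℤ) : Prop :=
  ∀ i, i < w.length → w.getD i false = x (k + (i : ℤ))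

/-- `w` is a factor of the bi-infinite word `x`. -/
def FactorOfZ (w : List Bool) (x : ℤ → Bool) : Prop := ∃ k, OccursAtZ w x k

/-- The subshift associated to an infinite word `V`. -/
def Subshift (V : ℕ → Bool) : Set (ℤ → Bool) :=
  {x | ∀ w, FactorOfZ w x → FactorOfN w V}

/-- Thue–Morse words: `M 0 = 0`, `M (n+1) = M n ++ complement (M n)`. -/
def M : ℕ → List Bool
  | 0 => [false]
  | n + 1 => M n ++ (M n).map (fun b => !b)

/-- The Thue–Morse sequence: parity of the number of 1's in binary expansion. -/
def tm (n : ℕ) : Bool := decide (((Nat.digits 2 n).count 1) % 2 = 1)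

/-- Rank-two towers for the Thue–Morse sequence. -/
def M2 : ℕ → List Bool × List Bool
  | 0 => ([false], [false])
  | n + 1 =>
    if n % 2 = 1 then ((M2 n).1 ++ [true] ++ (M2 n).2, (M2 n).2 ++ [true] ++ (M2 n).1)
    else ((M2 n).1 ++ [true, true] ++ (M2 n).2, (M2 n).2 ++ (M2 n).1)

lemma tm_two_mul (n : ℕ) : tm (2 * n) = tm n := by
  rcases Nat.eq_zero_or_pos n with rfl | hn
  · rfl
  · unfold tm
    rw [Nat.digits_def' (by norm_num : 1 < 2) (by omega)]
    have h1 : (2 * n) % 2 = 0 := by omega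
    have h2 : (2 * n) / 2 = n := by omega
    rw [h1, h2]
    simp

lemma tm_odd (n : ℕ) : tm (2 * n + 1) = ! tm n := by
  unfold tm
  rw [Nat.digits_def' (by norm_num : 1 < 2) (by omega)]
  have h1 : (2 * n + 1) % 2 = 1 := by omega
  have h2 : (2 * n + 1) / 2 = n := by omega
  rw [h1, h2, List.count_cons_self]
  rcases Nat.mod_two_eq_zero_or_one ((Nat.digits 2 n).count 1) with h | h <;>
    simp [Nat.add_mod, h]

lemma tm_consec {m : ℕ} (h : tm m = tm (m + 1)) : m % 2 = 1 := by
  rcases Nat.even_or_odd m with ⟨k, hk⟩ | hm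
  · exfalso
    have hm2 : m = 2 * k := by omega
    rw [hm2, tm_odd, tm_two_mul] at h
    cases tm k <;> simp_all
  · obtain ⟨k, hk⟩ := hm
    omega

lemma tm_not_periodic : ∀ p, 0 < p → (∀ n, tm (n + p) = tm n) → False := by
  intro p
  induction p using Nat.strong_induction_on with
  | _ p ih =>
    intro hp h
    rcases Nat.even_or_odd p with ⟨r, hr⟩ | ⟨q, hq⟩
    · have hr0 : 0 < r := by omega
      refine ih r (by omega) hr0 ?_
      intro n
      have h2 := h (2 * n)
      rw [show 2 * n + p = 2 * (n + r) by omega, tm_two_mul, tm_two_mul] at h2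
      exact h2
    · have key := h (2 * q)
      rw [show 2 * q + p = 2 * (2 * q) + 1 by omega, tm_odd, tm_two_mul] at key
      cases tm q <;> simp_all

lemma tm0 : tm 0 = false := by simp [tm]
lemma tm1 : tm 1 = true := by
  rw [show (1:ℕ) = 2 * 0 + 1 from rfl, tm_odd, tm0]; rfl
lemma tm2 : tm 2 = true := by
  rw [show (2:ℕ) = 2 * 1 from rfl, tm_two_mul]; exact tm1

lemma stage_zero (v a) : stage v a 0 = v := rfl

lemma stage_succ (v a n) : stage v a (n + 1) = stage v a n ++ (ones (a n) ++ v) := by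
  show stage v a n ++ ones (a n) ++ v = _
  rw [List.append_assoc]

lemma an_eq {v : List Bool} {a : ℕ → ℕ} (hpre : ∀ n, PrefixOf (stage v a n) tm)
    (hL3 : 3 ≤ v.length) (hv1 : v.getD 1 false = true) (hv2 : v.getD 2 false = true)
    (n : ℕ) (hs : (stage v a n).length % 2 = 1) : a n = 1 := by
  have hlen1 : (stage v a (n + 1)).length
      = (stage v a n).length + (a n + v.length) := by
    rw [stage_succ, List.length_append, List.length_append]
    simp [ones]
  have hv' : ∀ j, j < v.length →
      tm ((stage v a n).length + (a n + j)) = v.getD j false := by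
    intro j hj
    have hidx : (stage v a n).length + (a n + j) < (stage v a (n + 1)).length := by
      rw [hlen1]; omega
    have h := hpre (n + 1) _ hidx
    rw [← h, stage_succ,
      List.getD_append_right _ _ _ _ (by omega : (stage v a n).length ≤ _)]
    rw [show (stage v a n).length + (a n + j) - (stage v a n).length = a n + j by omega]
    rw [List.getD_append_right _ _ _ _ (by simp [ones] : (ones (a n)).length ≤ a n + j)]
    congr 1
    simp [ones]
  have hones : ∀ j, j < a n → tm ((stage v a n).length + j) = true := by
    intro j hj
    have hidx : (stage v a n).length + j < (stage v a (n + 1)).length := by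
      rw [hlen1]; omega
    have h := hpre (n + 1) _ hidx
    rw [← h, stage_succ,
      List.getD_append_right _ _ _ _ (by omega : (stage v a n).length ≤ _)]
    rw [show (stage v a n).length + j - (stage v a n).length = j by omega]
    rw [List.getD_append _ _ _ _ (by simp [ones]; omega)]
    rw [List.getD_eq_getElem _ _ (by simp [ones]; omega)]
    simp [ones]
  have h1 : tm ((stage v a n).length + (a n + 1)) = true := by
    rw [hv' 1 (by omega)]; exact hv1
  have h2 : tm ((stage v a n).length + (a n + 1) + 1) = true := by
    rw [show (stage v a n).length + (a n + 1) + 1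
        = (stage v a n).length + (a n + 2) by omega]
    rw [hv' 2 (by omega)]; exact hv2
  have hodd := tm_consec (h1.trans h2.symm)
  have hle : a n ≤ 2 := by
    by_contra hgt
    push_neg at hgt
    have e0 : tm ((stage v a n).length) = true := by
      have := hones 0 (by omega); simpa using this
    have e1 := hones 1 (by omega)
    have e2 := hones 2 (by omega)
    have o1 : (stage v a n).length % 2 = 1 := tm_consec (by rw [e0, ← e1])
    have o2 : ((stage v a n).length + 1) % 2 = 1 := by
      refine tm_consec ?_
      rw [e1, show (stage v a n).length + 1 + 1 = (stage v a n).length + 2 by omega, e2]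
    omega
  omega

lemma len_odd {v : List Bool} {a : ℕ → ℕ} (hpre : ∀ n, PrefixOf (stage v a n) tm)
    (hL : v.length % 2 = 1) (hL3 : 3 ≤ v.length)
    (hv1 : v.getD 1 false = true) (hv2 : v.getD 2 false = true) :
    ∀ n, (stage v a n).length % 2 = 1 := by
  intro n
  induction n with
  | zero => simpa [stage_zero] using hL
  | succ n ih =>
    have han := an_eq hpre hL3 hv1 hv2 n ih
    rw [stage_succ, List.length_append, List.length_append, han]
    simp [ones]
    omega

lemma stage_formula {v : List Bool} {a : ℕ → ℕ} (han : ∀ n, a n = 1) :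
    ∀ n, stage v a n = (List.replicate n (v ++ [true])).flatten ++ v := by
  intro n
  induction n with
  | zero => simp [stage_zero]
  | succ n ih =>
    rw [stage_succ, ih, han]
    simp [ones, List.replicate_succ', List.append_assoc]

lemma length_stage {v : List Bool} {a : ℕ → ℕ} (han : ∀ n, a n = 1) :
    ∀ n, (stage v a n).length = n * (v.length + 1) + v.length := by
  intro n
  induction n with
  | zero => simp [stage_zero]
  | succ n ih =>
    rw [stage_succ, List.length_append, List.length_append, han, ih]
    simp [ones]
    ring


theorem stmt5 : ¬ ∃ v : List Bool, InF v ∧ v.length % 2 = 1 ∧ v ≠ [false] ∧ BuiltFrom tm v := by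
  rintro ⟨v, ⟨hh, _⟩, hL, hne, a, hpre⟩
  have hv0 : v ≠ [] := by intro h; rw [h] at hh; simp at hh
  have hL1 : 1 ≤ v.length := List.length_pos_iff.mpr hv0
  have hL3 : 3 ≤ v.length := by
    rcases Nat.lt_or_ge v.length 3 with h | h
    · exfalso
      have h1 : v.length = 1 := by omega
      obtain ⟨x, hx⟩ := List.length_eq_one_iff.mp h1
      rw [hx] at hh
      simp at hh
      rw [hh] at hx
      exact hne hx
    · exact h
  have hv1 : v.getD 1 false = true := by
    have h := hpre 0 1 (by rw [stage_zero]; omega)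
    rw [stage_zero] at h
    rw [h, tm1]
  have hv2 : v.getD 2 false = true := by
    have h := hpre 0 2 (by rw [stage_zero]; omega)
    rw [stage_zero] at h
    rw [h, tm2]
  have han : ∀ n, a n = 1 := fun n =>
    an_eq hpre hL3 hv1 hv2 n (len_odd hpre hL hL3 hv1 hv2 n)
  have hper : ∀ m, tm (m + (v.length + 1)) = tm m := by
    intro m
    have hJ : stage v a (m + 2) = (v ++ [true]) ++ stage v a (m + 1) := by
      rw [stage_formula han, stage_formula han, List.replicate_succ]
      simp [List.append_assoc]
    have hmul2 : (m + 2) * (v.length + 1) = m * (v.length + 1) + 2 * (v.length + 1) := by ring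
    have hmle : m ≤ m * (v.length + 1) := Nat.le_mul_of_pos_right _ (by omega)
    have hidx2 : m + (v.length + 1) < (stage v a (m + 2)).length := by
      rw [length_stage han]; omega
    have e2 := hpre (m + 2) _ hidx2
    rw [← e2, hJ, List.getD_append_right _ _ _ _ (by simp)]
    rw [show m + (v.length + 1) - (v ++ [true]).length = m by simp]
    have hidx1 : m < (stage v a (m + 1)).length := by
      have h3 : m + 1 ≤ (m + 1) * (v.length + 1) := Nat.le_mul_of_pos_right _ (by omega)
      rw [length_stage han]; omega
    exact hpre (m + 1) _ hidx1
  exact tm_not_periodic (v.length + 1) (by omega) hper
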